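/- arXiv:1606.04737 — 3 statements merged into one kernel-verified Lean document; each statement's English description precedes it below -/
import Mathlib

section
/- Let f ∈ ℝ[x, y] be a nonzero homogeneous polynomial of degree d ≥ 1 and let q be the number of distinct real projective roots of f, i.e., the number of points [v] ∈ ℝℙ¹ with f(v) = 0. Then f has at least max(q, 1) distinct real eigenvectors: there exist at least max(q, 1) distinct classes [v] ∈ ℝℙ¹ such that v is a nonzero vector with ∇f(v) = λv for some λ ∈ ℝ. -/
open MvPolynomial Real Set

/-- The gradient of a polynomial `f ∈ ℝ[x₁,…,xₙ]` at a point `v ∈ ℝⁿ`. -/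
noncomputable def grad {n : ℕ} (f : MvPolynomial (Fin n) ℝ) (v : Fin n → ℝ) : Fin n → ℝ :=
  fun i => eval v (pderiv i f)

/-- The set of real eigenvectors of `f`, counted projectively: classes
`[v] ∈ ℝℙⁿ⁻¹` of nonzero vectors `v` with `∇f(v) = λ v` for some real `λ`. -/
def eigSet {n : ℕ} (f : MvPolynomial (Fin n) ℝ) :
    Set (Projectivization ℝ (Fin n → ℝ)) :=
  {p | ∃ (v : Fin n → ℝ) (hv : v ≠ 0) (lam : ℝ),
    p = Projectivization.mk ℝ v hv ∧ grad f v = lam • v}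

lemma unit_ne (t : ℝ) : (![Real.cos t, Real.sin t] : Fin 2 → ℝ) ≠ 0 := by
  intro h
  have h0 : Real.cos t = 0 := by simpa using congrFun h 0
  have h1 : Real.sin t = 0 := by simpa using congrFun h 1
  have h2 := Real.sin_sq_add_cos_sq t
  rw [h0, h1] at h2; norm_num at h2

lemma eval_smul_homog {n d : ℕ} {f : MvPolynomial (Fin n) ℝ}
    (hf : f.IsHomogeneous d) (c : ℝ) (v : Fin n → ℝ) :
    eval (c • v) f = c ^ d * eval v f := by
  rw [eval_eq, eval_eq, Finset.mul_sum]
  refine Finset.sum_congr rfl fun m hm => ?_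
  have hdeg : ∑ i ∈ m.support, m i = d := by
    have h1 := hf (mem_support_iff.mp hm)
    have h2 := DFunLike.congr_fun Finsupp.degree_eq_weight_one m
    exact h2.trans h1
  calc f.coeff m * ∏ i ∈ m.support, (c • v) i ^ m i
      = f.coeff m * ∏ i ∈ m.support, (c ^ m i * v i ^ m i) := by
        simp [Pi.smul_apply, smul_eq_mul, mul_pow]
    _ = f.coeff m * ((∏ i ∈ m.support, c ^ m i) * ∏ i ∈ m.support, v i ^ m i) := by
        rw [Finset.prod_mul_distrib]
    _ = c ^ d * (f.coeff m * ∏ i ∈ m.support, v i ^ m i) := by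
        rw [Finset.prod_pow_eq_pow_sum, hdeg]; ring

lemma mem_eig (f : MvPolynomial (Fin 2) ℝ) (v : Fin 2 → ℝ) (hv : v ≠ 0)
    (h : v 0 * eval v (pderiv 1 f) - v 1 * eval v (pderiv 0 f) = 0) :
    Projectivization.mk ℝ v hv ∈ eigSet f := by
  have hv2 : 0 < v 0 ^ 2 + v 1 ^ 2 := by
    rcases show v 0 ≠ 0 ∨ v 1 ≠ 0 by
      by_contra hc
      push_neg at hc
      exact hv (funext fun i => by fin_cases i <;> simp [hc.1, hc.2]) with h0 | h1
    · positivity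
    · positivity
  refine ⟨v, hv, (eval v (pderiv 0 f) * v 0 + eval v (pderiv 1 f) * v 1) / (v 0 ^ 2 + v 1 ^ 2),
    rfl, ?_⟩
  funext i
  fin_cases i
  · simp only [grad, Pi.smul_apply, smul_eq_mul, Fin.zero_eta, Fin.mk_one]
    field_simp
    linear_combination (-(v 1)) * h
  · simp only [grad, Pi.smul_apply, smul_eq_mul, Fin.zero_eta, Fin.mk_one]
    field_simp
    linear_combination (v 0) * h

/-- The tangential derivative form. -/
noncomputable def Dtan (f : MvPolynomial (Fin 2) ℝ) (t : ℝ) : ℝ :=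
  eval ![Real.cos t, Real.sin t] (pderiv 1 f) * Real.cos t
    - eval ![Real.cos t, Real.sin t] (pderiv 0 f) * Real.sin t

lemma hasDeriv_circle (f : MvPolynomial (Fin 2) ℝ) (t : ℝ) :
    HasDerivAt (fun θ : ℝ => eval ![Real.cos θ, Real.sin θ] f) (Dtan f t) t := by
  induction f using MvPolynomial.induction_on with
  | C a =>
    simp only [eval_C, Dtan, pderiv_C, map_zero, zero_mul, sub_zero, mul_zero]
    simpa using hasDerivAt_const t a
  | add p q hp hq =>
    have e : Dtan (p + q) t = Dtan p t + Dtan q t := by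
      simp only [Dtan, map_add]; ring
    rw [e]
    simpa only [map_add, Pi.add_def] using hp.add hq
  | mul_X p i hp =>
    have hcoord : HasDerivAt (fun θ : ℝ => (![Real.cos θ, Real.sin θ] : Fin 2 → ℝ) i)
        (![-Real.sin t, Real.cos t] i) t := by
      fin_cases i
      · simpa using Real.hasDerivAt_cos t
      · simpa using Real.hasDerivAt_sin t
    have e : Dtan (p * X i) t = Dtan p t * ![Real.cos t, Real.sin t] i
        + eval ![Real.cos t, Real.sin t] p * ![-Real.sin t, Real.cos t] i := by
      fin_cases i
      · simp only [Fin.mk_zero, Fin.mk_one, Dtan, pderiv_mul, pderiv_X_self,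
          pderiv_X_of_ne (show (0:Fin 2) ≠ 1 by decide),
          pderiv_X_of_ne (show (1:Fin 2) ≠ 0 by decide), map_add, map_mul, eval_X,
          Matrix.cons_val_zero, Matrix.cons_val_one, Matrix.head_cons, mul_one,
          map_one, mul_zero, add_zero]
        ring
      · simp only [Fin.mk_zero, Fin.mk_one, Dtan, pderiv_mul, pderiv_X_self,
          pderiv_X_of_ne (show (0:Fin 2) ≠ 1 by decide),
          pderiv_X_of_ne (show (1:Fin 2) ≠ 0 by decide), map_add, map_mul, eval_X,
          Matrix.cons_val_zero, Matrix.cons_val_one, Matrix.head_cons, mul_one,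
          map_one, mul_zero, add_zero]
        ring
    rw [e]
    simpa only [map_mul, eval_X, Pi.mul_def] using hp.mul hcoord

lemma exists_angle (p : Projectivization ℝ (Fin 2 → ℝ)) :
    ∃ t, t ∈ Ico 0 π ∧ Projectivization.mk ℝ ![Real.cos t, Real.sin t] (unit_ne t) = p := by
  induction p using Projectivization.ind with
  | h v hv =>
  set s : ℝ := if 0 < v 1 then 1 else if v 1 < 0 then -1 else if 0 < v 0 then 1 else -1 with hs
  set a : ℝ := s * v 0 with ha
  set b : ℝ := s * v 1 with hb
  have hv01 : v 0 ≠ 0 ∨ v 1 ≠ 0 := by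
    by_contra hc
    push_neg at hc
    exact hv (funext fun i => by fin_cases i <;> simp [hc.1, hc.2])
  have hs1 : s = 1 ∨ s = -1 := by
    rw [hs]; split_ifs <;> simp
  have hsne : s ≠ 0 := by rcases hs1 with h | h <;> rw [h] <;> norm_num
  have hbpos : 0 ≤ b := by
    rw [hb, hs]
    rcases lt_trichotomy (v 1) 0 with h | h | h
    · rw [if_neg (by linarith), if_pos h]; nlinarith
    · simp [h]
    · rw [if_pos h]; nlinarith
  have hb0 : b = 0 → 0 < a := by
    intro h0
    have hv1 : v 1 = 0 := by
      rcases hs1 with h | h <;> [skip; skip] <;>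
        · rw [hb, h] at h0; linarith [h0]
    have hv0 : v 0 ≠ 0 := hv01.resolve_right (fun h => h hv1)
    rw [ha, hs, if_neg (by rw [hv1]; norm_num), if_neg (by rw [hv1]; norm_num)]
    rcases lt_trichotomy (v 0) 0 with h | h | h
    · rw [if_neg (by linarith)]; nlinarith
    · exact absurd h hv0
    · rw [if_pos h]; nlinarith
  have habpos : 0 < a ^ 2 + b ^ 2 := by
    rcases hv01 with h | h
    · have : a ≠ 0 := by rw [ha]; exact mul_ne_zero hsne h
      positivity
    · have : b ≠ 0 := by rw [hb]; exact mul_ne_zero hsne h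
      positivity
  set n : ℝ := Real.sqrt (a ^ 2 + b ^ 2) with hn
  have hnpos : 0 < n := Real.sqrt_pos.mpr habpos
  have hn2 : n ^ 2 = a ^ 2 + b ^ 2 := Real.sq_sqrt habpos.le
  have hna : |a| ≤ n := by
    rw [← Real.sqrt_sq_eq_abs, hn]
    exact Real.sqrt_le_sqrt (by nlinarith)
  have hle : -1 ≤ a / n ∧ a / n ≤ 1 := by
    constructor
    · rw [neg_le, ← neg_div, div_le_one hnpos]
      linarith [(abs_le.mp hna).1]
    · rw [div_le_one hnpos]
      exact (abs_le.mp hna).2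
  set t : ℝ := Real.arccos (a / n) with ht
  have hcos : Real.cos t = a / n := Real.cos_arccos hle.1 hle.2
  have hsin : Real.sin t = b / n := by
    rw [ht, Real.sin_arccos]
    have : 1 - (a / n) ^ 2 = (b / n) ^ 2 := by
      field_simp
      nlinarith
    rw [this, Real.sqrt_sq (by positivity)]
  have htlt : t < π := by
    rcases lt_or_eq_of_le (Real.arccos_le_pi (a / n)) with h | h
    · exact h
    · exfalso
      have hsin0 : Real.sin t = 0 := by rw [ht, h]; simp
      have hb' : b = 0 := by
        rw [hsin] at hsin0
        field_simp at hsin0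
        simpa using hsin0
      have hapos := hb0 hb'
      have : Real.cos t = -1 := by rw [ht, h]; simp
      rw [hcos] at this
      have : a = -n := by field_simp at this; linarith
      nlinarith
  refine ⟨t, ⟨Real.arccos_nonneg _, htlt⟩, ?_⟩
  rw [Projectivization.mk_eq_mk_iff']
  refine ⟨s / n, funext fun i => ?_⟩
  fin_cases i
  · simp only [Fin.zero_eta, Fin.mk_one, Pi.smul_apply, smul_eq_mul, Matrix.cons_val_zero]
    rw [hcos, ha]; field_simp
  · simp only [Fin.zero_eta, Fin.mk_one, Pi.smul_apply, smul_eq_mul, Matrix.cons_val_one, Matrix.head_cons, Matrix.cons_val_zero]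
    rw [hsin, hb]; field_simp

lemma sin_sub_eq_zero_of_mk_eq {s t : ℝ}
    (h : Projectivization.mk ℝ ![Real.cos s, Real.sin s] (unit_ne s)
       = Projectivization.mk ℝ ![Real.cos t, Real.sin t] (unit_ne t)) :
    Real.sin (s - t) = 0 := by
  rw [Projectivization.mk_eq_mk_iff'] at h
  obtain ⟨c, hc⟩ := h
  have h0 : c * Real.cos t = Real.cos s := by simpa using congrFun hc 0
  have h1 : c * Real.sin t = Real.sin s := by simpa using congrFun hc 1
  rw [Real.sin_sub, ← h0, ← h1]
  ring

noncomputable def Fc (f : MvPolynomial (Fin 2) ℝ) (θ : ℝ) : ℝ :=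
  eval ![Real.cos θ, Real.sin θ] f

lemma hasDeriv_Fc (f : MvPolynomial (Fin 2) ℝ) (t : ℝ) : HasDerivAt (Fc f) (Dtan f t) t :=
  hasDeriv_circle f t

/-- A nonzero binary form of degree `d ≥ 1` with `q` distinct real projective roots
has at least `max q 1` distinct real eigenvectors. -/
theorem binary_form_eigenvectors_ge_roots
    {d : ℕ} (hd : 1 ≤ d) (f : MvPolynomial (Fin 2) ℝ) (hf0 : f ≠ 0)
    (hf : f.IsHomogeneous d) (q : ℕ)
    (hq : {p : Projectivization ℝ (Fin 2 → ℝ) | ∃ (v : Fin 2 → ℝ) (hv : v ≠ 0),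
      p = Projectivization.mk ℝ v hv ∧ eval v f = 0}.ncard = q) :
    ∃ T : Finset (Projectivization ℝ (Fin 2 → ℝ)),
      max q 1 ≤ T.card ∧ ∀ p ∈ T, p ∈ eigSet f := by
  classical
  set S := {p : Projectivization ℝ (Fin 2 → ℝ) | ∃ (v : Fin 2 → ℝ) (hv : v ≠ 0),
      p = Projectivization.mk ℝ v hv ∧ eval v f = 0} with hSdef
  have hcont : Continuous (Fc f) := by
    rw [continuous_iff_continuousAt]; exact fun t => (hasDeriv_Fc f t).continuousAt
  have crit : ∀ t, Dtan f t = 0 →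
      Projectivization.mk ℝ ![Real.cos t, Real.sin t] (unit_ne t) ∈ eigSet f := by
    intro t ht
    apply mem_eig
    unfold Dtan at ht
    simp only [Matrix.cons_val_zero, Matrix.cons_val_one, Matrix.head_cons]
    linear_combination ht
  have rolle : ∀ a b : ℝ, a < b → Fc f a = 0 → Fc f b = 0 →
      ∃ c ∈ Ioo a b, Dtan f c = 0 := fun a b hab ha hb =>
    exists_hasDerivAt_eq_zero hab hcont.continuousOn (ha.trans hb.symm)
      fun x _ => hasDeriv_Fc f x
  rcases Nat.eq_zero_or_pos q with hq0 | hqpos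
  · -- q = 0 : produce one eigenvector
    have hF02 : Fc f 0 = Fc f (2 * π) := by
      have e1 : Real.cos (2 * π) = Real.cos 0 := by rw [Real.cos_two_pi, Real.cos_zero]
      have e2 : Real.sin (2 * π) = Real.sin 0 := by rw [Real.sin_two_pi, Real.sin_zero]
      unfold Fc; rw [e1, e2]
    obtain ⟨c, _, hc⟩ := exists_hasDerivAt_eq_zero
      (show (0:ℝ) < 2 * π by positivity) hcont.continuousOn hF02 fun x _ => hasDeriv_Fc f x
    refine ⟨{Projectivization.mk ℝ ![Real.cos c, Real.sin c] (unit_ne c)}, ?_, ?_⟩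
    · simp [hq0]
    · intro p hp
      rw [Finset.mem_singleton] at hp
      rw [hp]; exact crit c hc
  · -- q ≥ 1
    have hSfin : S.Finite := Set.finite_of_ncard_ne_zero (by omega)
    choose ang hang1 hang2 using exists_angle
    set A : Finset ℝ := hSfin.toFinset.image ang with hAdef
    have hmem : ∀ a ∈ A, ∃ p ∈ S, ang p = a := by
      intro a ha
      rw [hAdef, Finset.mem_image] at ha
      obtain ⟨p, hp, rfl⟩ := ha
      exact ⟨p, (Set.Finite.mem_toFinset hSfin).mp hp, rfl⟩
    have hanginj : ∀ p p', ang p = ang p' → p = p' := by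
      intro p p' h
      have h2 := hang2 p
      rw [h] at h2
      exact h2.symm.trans (hang2 p')
    have hAcard : A.card = q := by
      rw [hAdef, Finset.card_image_of_injOn (fun p _ p' _ h => hanginj p p' h)]
      rw [← Set.ncard_eq_toFinset_card S hSfin, hq]
    have hA0 : ∀ a ∈ A, Fc f a = 0 := by
      intro a ha
      obtain ⟨p, hp, rfl⟩ := hmem a ha
      obtain ⟨v, hv, rfl, hfv⟩ := hp
      have h2 := hang2 (Projectivization.mk ℝ v hv)
      rw [Projectivization.mk_eq_mk_iff'] at h2
      obtain ⟨cc, hcc⟩ := h2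
      unfold Fc
      rw [← hcc, eval_smul_homog hf, hfv, mul_zero]
    have hApi : ∀ a ∈ A, Fc f (a + π) = 0 := by
      intro a ha
      have hcoords : (![Real.cos (a + π), Real.sin (a + π)] : Fin 2 → ℝ)
          = (-1 : ℝ) • ![Real.cos a, Real.sin a] := by
        funext i
        fin_cases i <;> simp [Real.cos_add_pi, Real.sin_add_pi]
      have h0 := hA0 a ha
      unfold Fc at *
      rw [hcoords, eval_smul_homog hf, h0, mul_zero]
    have hArange : ∀ a ∈ A, a ∈ Ico 0 π := by
      intro a ha
      obtain ⟨p, _, rfl⟩ := hmem a ha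
      exact hang1 p
    have hAne : A.Nonempty := Finset.card_pos.mp (by rw [hAcard]; omega)
    set m := A.min' hAne with hm
    have hmA : m ∈ A := A.min'_mem hAne
    have hm0 : 0 ≤ m := (hArange m hmA).1
    have key : ∀ a ∈ A, ∃ c, (a < c ∧ c < m + π) ∧ Dtan f c = 0 ∧
        ∀ b ∈ A, a < b → c < b := by
      intro a ha
      have hapi : a < π := (hArange a ha).2
      by_cases hB : (A.filter (fun b => a < b)).Nonempty
      · have hb0mem := (A.filter (fun b => a < b)).min'_mem hB
        rw [Finset.mem_filter] at hb0mem
        obtain ⟨hb0A, hab0⟩ := hb0mem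
        obtain ⟨c, hcmem, hcD⟩ := rolle a _ hab0 (hA0 a ha) (hA0 _ hb0A)
        refine ⟨c, ⟨hcmem.1, ?_⟩, hcD, ?_⟩
        · have h1 : (A.filter (fun b => a < b)).min' hB < π :=
            (hArange _ hb0A).2
          linarith [hcmem.2]
        · intro b hb hab
          have : (A.filter (fun b => a < b)).min' hB ≤ b :=
            Finset.min'_le _ b (Finset.mem_filter.mpr ⟨hb, hab⟩)
          linarith [hcmem.2]
      · have hma : m ≤ a := A.min'_le a ha
        obtain ⟨c, hcmem, hcD⟩ := rolle a (m + π) (by linarith) (hA0 a ha) (hApi m hmA)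
        refine ⟨c, ⟨hcmem.1, hcmem.2⟩, hcD, ?_⟩
        intro b hb hab
        exact absurd ⟨b, Finset.mem_filter.mpr ⟨hb, hab⟩⟩ hB
    choose! c hc using key
    have hlt : ∀ a ∈ A, ∀ a' ∈ A, a < a' →
        Projectivization.mk ℝ ![Real.cos (c a), Real.sin (c a)] (unit_ne _)
          ≠ Projectivization.mk ℝ ![Real.cos (c a'), Real.sin (c a')] (unit_ne _) := by
      intro a ha a' ha' h heq
      obtain ⟨⟨h1a, h2a⟩, _, h3a⟩ := hc a ha
      obtain ⟨⟨h1a', h2a'⟩, _, _⟩ := hc a' ha'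
      have hma : m ≤ a := A.min'_le a ha
      have hca : c a < a' := h3a a' ha' h
      have hpos : 0 < c a' - c a := by linarith
      have hltpi : c a' - c a < π := by linarith
      have hs1 := Real.sin_pos_of_pos_of_lt_pi hpos hltpi
      have hs0 := sin_sub_eq_zero_of_mk_eq heq.symm
      linarith
    have hinj : Set.InjOn (fun a =>
        Projectivization.mk ℝ ![Real.cos (c a), Real.sin (c a)] (unit_ne _)) ↑A := by
      intro a ha a' ha' he
      rw [Finset.mem_coe] at ha ha'
      by_contra hne
      rcases lt_or_gt_of_ne hne with h | h
      · exact hlt a ha a' ha' h he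
      · exact hlt a' ha' a ha h he.symm
    refine ⟨A.image (fun a =>
        Projectivization.mk ℝ ![Real.cos (c a), Real.sin (c a)] (unit_ne _)), ?_, ?_⟩
    · rw [Finset.card_image_of_injOn hinj, hAcard]; omega
    · intro p hp
      rw [Finset.mem_image] at hp
      obtain ⟨a, ha, rfl⟩ := hp
      exact crit (c a) (hc a ha).2.1
end

section
/- Let f ∈ ℝ[x, y] be a homogeneous polynomial of degree d that splits as a product of d pairwise non-proportional real linear forms (so f has exactly d distinct real projective roots). Then f has exactly d real eigenvectors: the set {[v] ∈ ℝℙ¹ : v ≠ 0 and ∇f(v) = λv for some λ ∈ ℝ} has exactly d elements. -/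
open MvPolynomial Finset Filter

lemma pderiv_finset_prod {σ' : Type*} [DecidableEq σ'] {ι : Type*} [DecidableEq ι]
    (k : σ') (s : Finset ι) (g : ι → MvPolynomial σ' ℝ) :
    pderiv k (∏ i ∈ s, g i) = ∑ j ∈ s, pderiv k (g j) * ∏ i ∈ s.erase j, g i := by
  classical
  induction s using Finset.induction_on with
  | empty => simp
  | insert c s' ha ih =>
    have hs : ∀ j ∈ s', g c * (pderiv k (g j) * ∏ i ∈ s'.erase j, g i)
        = pderiv k (g j) * ∏ i ∈ (insert c s').erase j, g i := by
      intro j hj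
      have hcj : c ≠ j := fun h => ha (h ▸ hj)
      rw [Finset.erase_insert_of_ne hcj,
        Finset.prod_insert (fun h => ha (Finset.mem_of_mem_erase h))]
      ring
    rw [Finset.prod_insert ha, pderiv_mul, ih, Finset.sum_insert ha,
      Finset.erase_insert ha, Finset.mul_sum, Finset.sum_congr rfl hs]


lemma sign_prod {ι : Type*} [DecidableEq ι] (s : Finset ι) (f : ι → ℝ)
    (h : ∀ i ∈ s, f i ≠ 0) :
    0 < (-1 : ℝ) ^ ((s.filter (fun i => f i < 0)).card) * ∏ i ∈ s, f i := by
  classical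
  induction s using Finset.induction_on with
  | empty => simp
  | insert c s' ha ih =>
    have hc := h c (Finset.mem_insert_self c s')
    have ih' := ih (fun i hi => h i (Finset.mem_insert_of_mem hi))
    rw [Finset.prod_insert ha, Finset.filter_insert]
    by_cases hneg : f c < 0
    · rw [if_pos hneg, Finset.card_insert_of_notMem (fun hc' => ha (Finset.mem_of_mem_filter _ hc'))]
      rw [pow_succ]
      have : (-1:ℝ) ^ (Finset.filter (fun i => f i < 0) s').card * -1 * (f c * ∏ i ∈ s', f i)
          = (-f c) * ((-1:ℝ) ^ (Finset.filter (fun i => f i < 0) s').card * ∏ i ∈ s', f i) := by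
        ring
      rw [this]
      exact mul_pos (by linarith) ih'
    · rw [if_neg hneg]
      have hpos : 0 < f c := lt_of_le_of_ne (not_lt.mp hneg) (Ne.symm hc)
      have : (-1:ℝ) ^ (Finset.filter (fun i => f i < 0) s').card * (f c * ∏ i ∈ s', f i)
          = f c * ((-1:ℝ) ^ (Finset.filter (fun i => f i < 0) s').card * ∏ i ∈ s', f i) := by
        ring
      rw [this]
      exact mul_pos hpos ih'

lemma exists_root_of_mul_neg (p : Polynomial ℝ) {x y : ℝ} (hxy : x < y)
    (h : p.eval x * p.eval y < 0) : ∃ z ∈ Set.Ioo x y, p.eval z = 0 := by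
  have hcont : ContinuousOn (fun t => p.eval t) (Set.Icc x y) := p.continuous.continuousOn
  rcases mul_neg_iff.mp h with ⟨hx, hy⟩ | ⟨hx, hy⟩
  · have := intermediate_value_Ioo' hxy.le hcont
    have h0 : (0:ℝ) ∈ Set.Ioo (p.eval y) (p.eval x) := ⟨hy, hx⟩
    obtain ⟨z, hz, hz0⟩ := this h0
    exact ⟨z, hz, hz0⟩
  · have := intermediate_value_Ioo hxy.le hcont
    have h0 : (0:ℝ) ∈ Set.Ioo (p.eval x) (p.eval y) := ⟨hx, hy⟩
    obtain ⟨z, hz, hz0⟩ := this h0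
    exact ⟨z, hz, hz0⟩

lemma exists_eval_pos_gt (p : Polynomial ℝ) (hdeg : 0 < p.degree)
    (hlc : 0 < p.leadingCoeff) (x0 : ℝ) : ∃ M, x0 < M ∧ 0 < p.eval M := by
  have ht := p.tendsto_atTop_of_leadingCoeff_nonneg hdeg hlc.le
  have h1 : ∀ᶠ M in atTop, 0 < p.eval M := ht.eventually_gt_atTop 0
  have h2 : ∀ᶠ M in atTop, x0 < M := eventually_gt_atTop x0
  exact ((h2.and h1).exists)

namespace Eig

variable {d : ℕ}

/-- the "eigen-discriminant" of the split form, evaluated at `v`. -/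
def EL (a b : Fin d → ℝ) (v : Fin 2 → ℝ) : ℝ :=
  ∑ j, (v 0 * b j - v 1 * a j) * ∏ i ∈ Finset.univ.erase j, (a i * v 0 + b i * v 1)

def SL (a b : Fin d → ℝ) : Set (Projectivization ℝ (Fin 2 → ℝ)) :=
  {p | ∃ (v : Fin 2 → ℝ) (hv : v ≠ 0), p = Projectivization.mk ℝ v hv ∧ EL a b v = 0}

lemma grad_prod_linear (a b : Fin d → ℝ) (v : Fin 2 → ℝ) (k : Fin 2) (c : Fin d → ℝ)
    (hc : ∀ j, pderiv k (C (a j) * X 0 + C (b j) * X 1) = C (c j)) :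
    grad (∏ i : Fin d, (C (a i) * X 0 + C (b i) * X 1)) v k
      = ∑ j, c j * ∏ i ∈ Finset.univ.erase j, (a i * v 0 + b i * v 1) := by
  rw [grad, pderiv_finset_prod, eval_sum]
  refine Finset.sum_congr rfl fun j _ => ?_
  rw [hc j]
  simp [eval_prod]

lemma grad_prod_linear0 (a b : Fin d → ℝ) (v : Fin 2 → ℝ) :
    grad (∏ i : Fin d, (C (a i) * X 0 + C (b i) * X 1)) v 0
      = ∑ j, a j * ∏ i ∈ Finset.univ.erase j, (a i * v 0 + b i * v 1) :=
  grad_prod_linear a b v 0 a (fun j => by simp [pderiv_X, Pi.single_apply])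

lemma grad_prod_linear1 (a b : Fin d → ℝ) (v : Fin 2 → ℝ) :
    grad (∏ i : Fin d, (C (a i) * X 0 + C (b i) * X 1)) v 1
      = ∑ j, b j * ∏ i ∈ Finset.univ.erase j, (a i * v 0 + b i * v 1) :=
  grad_prod_linear a b v 1 b (fun j => by simp [pderiv_X, Pi.single_apply])

lemma eigSet_eq_SL (a b : Fin d → ℝ) (f : MvPolynomial (Fin 2) ℝ)
    (hf : f = ∏ i : Fin d, (C (a i) * X 0 + C (b i) * X 1)) :
    eigSet f = SL a b := by
  ext p
  simp only [eigSet, SL, Set.mem_setOf_eq]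
  constructor
  · rintro ⟨v, hv, lam, rfl, hgrad⟩
    refine ⟨v, hv, rfl, ?_⟩
    have h0 : grad f v 0 = lam * v 0 := by rw [hgrad]; simp
    have h1 : grad f v 1 = lam * v 1 := by rw [hgrad]; simp
    have hE : v 0 * grad f v 1 - v 1 * grad f v 0 = 0 := by
      rw [h0, h1]; ring
    rw [hf] at hE
    rw [EL]
    rw [grad_prod_linear0, grad_prod_linear1] at hE
    rw [← hE, Finset.mul_sum, Finset.mul_sum, ← Finset.sum_sub_distrib]
    refine Finset.sum_congr rfl fun j _ => ?_
    ring
  · rintro ⟨v, hv, rfl, hE⟩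
    have hE' : v 0 * grad f v 1 - v 1 * grad f v 0 = 0 := by
      rw [hf, grad_prod_linear0, grad_prod_linear1]
      rw [← hE, EL, Finset.mul_sum, Finset.mul_sum, ← Finset.sum_sub_distrib]
      refine Finset.sum_congr rfl fun j _ => ?_
      ring
    by_cases h0 : v 0 = 0
    · have h1 : v 1 ≠ 0 := by
        intro h1; apply hv; funext i; fin_cases i <;> assumption
      refine ⟨v, hv, grad f v 1 / v 1, rfl, ?_⟩
      funext i
      fin_cases i
      · have : v 1 * grad f v 0 = 0 := by rw [← sub_eq_zero.mp hE', h0]; ring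
        have := (mul_eq_zero.mp this).resolve_left h1
        simpa [h0] using this
      · simp [Pi.smul_apply, smul_eq_mul, div_mul_cancel₀ _ h1]
    · refine ⟨v, hv, grad f v 0 / v 0, rfl, ?_⟩
      funext i
      fin_cases i
      · simp [Pi.smul_apply, smul_eq_mul, div_mul_cancel₀ _ h0]
      · have : v 0 * grad f v 1 = v 1 * grad f v 0 := sub_eq_zero.mp hE'
        field_simp
        show grad f v 1 = (grad f v 0 / v 0) * v 1
        rw [div_mul_eq_mul_div, eq_div_iff h0]; linarith [this]





noncomputable def qp (a b : Fin d → ℝ) : Polynomial ℝ :=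
  ∑ j, (Polynomial.C (b j) * Polynomial.X - Polynomial.C (a j)) *
    ∏ i ∈ Finset.univ.erase j, (Polynomial.C (a i) * Polynomial.X + Polynomial.C (b i))

def Kc (a b : Fin d → ℝ) : ℝ := ∑ j, b j * ∏ i ∈ Finset.univ.erase j, a i

lemma EL_t1 (a b : Fin d → ℝ) (t : ℝ) : EL a b ![t, 1] = (qp a b).eval t := by
  rw [EL, qp, Polynomial.eval_finset_sum]
  refine Finset.sum_congr rfl fun j _ => ?_
  rw [Polynomial.eval_mul, Polynomial.eval_prod]
  simp only [Polynomial.eval_sub, Polynomial.eval_mul, Polynomial.eval_add,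
    Polynomial.eval_C, Polynomial.eval_X, Matrix.cons_val_zero, Matrix.cons_val_one,
    Matrix.head_cons]
  congr 1
  · ring
  · exact Finset.prod_congr rfl fun i _ => by ring

lemma EL_10 (a b : Fin d → ℝ) : EL a b ![(1:ℝ), 0] = Kc a b := by
  rw [EL, Kc]
  refine Finset.sum_congr rfl fun j _ => ?_
  simp

lemma EL_smul (hd : 1 ≤ d) (a b : Fin d → ℝ) (c : ℝ) (v : Fin 2 → ℝ) :
    EL a b (c • v) = c ^ d * EL a b v := by
  rw [EL, EL, Finset.mul_sum]
  refine Finset.sum_congr rfl fun j _ => ?_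
  have hcard : (Finset.univ.erase j).card = d - 1 := by
    rw [Finset.card_erase_of_mem (Finset.mem_univ j), Finset.card_univ, Fintype.card_fin]
  have hprod : ∏ i ∈ Finset.univ.erase j, (a i * (c • v) 0 + b i * (c • v) 1)
      = c ^ (d - 1) * ∏ i ∈ Finset.univ.erase j, (a i * v 0 + b i * v 1) := by
    rw [← hcard, ← Finset.prod_const c, ← Finset.prod_mul_distrib]
    refine Finset.prod_congr rfl fun i _ => ?_
    simp [Pi.smul_apply, smul_eq_mul]; ring
  rw [hprod]
  have hc : c ^ d = c * c ^ (d - 1) := by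
    conv_lhs => rw [show d = (d-1) + 1 by omega]
    rw [pow_succ]; ring
  simp only [Pi.smul_apply, smul_eq_mul]
  rw [hc]; ring







lemma nz_t1 (t : ℝ) : ![t, (1:ℝ)] ≠ 0 := fun h => by simpa using congrFun h 1

lemma nz_10 : ![(1:ℝ), 0] ≠ 0 := fun h => by simpa using congrFun h 0

noncomputable def mkT (t : ℝ) : Projectivization ℝ (Fin 2 → ℝ) :=
  Projectivization.mk ℝ ![t, 1] (nz_t1 t)

noncomputable def inf : Projectivization ℝ (Fin 2 → ℝ) :=
  Projectivization.mk ℝ ![(1:ℝ), 0] nz_10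

lemma mkT_injective : Function.Injective mkT := by
  intro s t h
  rw [mkT, mkT, Projectivization.mk_eq_mk_iff] at h
  obtain ⟨u, hu⟩ := h
  have h1 := congrFun hu 1
  have h0 := congrFun hu 0
  simp [Units.smul_def] at h1 h0
  rw [h1] at h0
  simpa using h0.symm

lemma mkT_ne_inf (t : ℝ) : mkT t ≠ inf := by
  intro h
  rw [mkT, inf, Projectivization.mk_eq_mk_iff] at h
  obtain ⟨u, hu⟩ := h
  have h1 := congrFun hu 1
  simp [Units.smul_def] at h1


lemma SL_decomp (hd : 1 ≤ d) (a b : Fin d → ℝ) :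
    SL a b = mkT '' {t : ℝ | (qp a b).eval t = 0} ∪ (if Kc a b = 0 then {inf} else ∅) := by
  ext p
  constructor
  · rintro ⟨v, hv, rfl, hE⟩
    by_cases h1 : v 1 = 0
    · have h0 : v 0 ≠ 0 := by
        intro h0; exact hv (funext fun i => by fin_cases i <;> assumption)
      have hveq : v = v 0 • ![(1:ℝ), 0] := by
        funext i; fin_cases i <;> simp [h1]
      have hK : Kc a b = 0 := by
        have hs := EL_smul hd a b (v 0) ![(1:ℝ), 0]
        rw [← hveq, hE, EL_10] at hs
        exact (mul_eq_zero.mp hs.symm).resolve_left (pow_ne_zero _ h0)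
      rw [if_pos hK]
      right
      rw [Set.mem_singleton_iff, inf, Projectivization.mk_eq_mk_iff]
      exact ⟨Units.mk0 (v 0) h0, hveq.symm⟩
    · left
      refine ⟨v 0 / v 1, ?_, ?_⟩
      · have hveq : v = v 1 • ![v 0 / v 1, 1] := by
          funext i; fin_cases i <;> simp
          field_simp
        have hs := EL_smul hd a b (v 1) ![v 0 / v 1, 1]
        rw [← hveq, hE, EL_t1] at hs
        exact Set.mem_setOf_eq ▸
          ((mul_eq_zero.mp hs.symm).resolve_left (pow_ne_zero _ h1))
      · rw [mkT, Projectivization.mk_eq_mk_iff]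
        refine ⟨(Units.mk0 (v 1) h1)⁻¹, funext fun i => ?_⟩
        simp only [Units.smul_def, Pi.smul_apply, smul_eq_mul, Units.val_inv_eq_inv_val,
          Units.val_mk0]
        fin_cases i
        · show (v 1)⁻¹ * v 0 = v 0 / v 1
          field_simp
        · show (v 1)⁻¹ * v 1 = 1
          field_simp
  · intro hp
    rcases hp with ⟨t, ht, rfl⟩ | hp
    · exact ⟨![t, 1], nz_t1 t, rfl, by rw [EL_t1]; exact ht⟩
    · by_cases hK : Kc a b = 0
      · rw [if_pos hK, Set.mem_singleton_iff] at hp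
        subst hp
        exact ⟨![(1:ℝ), 0], nz_10, rfl, by rw [EL_10]; exact hK⟩
      · rw [if_neg hK] at hp
        exact absurd hp (Set.notMem_empty _)

lemma SL_ncard (hd : 1 ≤ d) (a b : Fin d → ℝ) (hq : qp a b ≠ 0) :
    (SL a b).ncard
      = {t : ℝ | (qp a b).eval t = 0}.ncard + (if Kc a b = 0 then 1 else 0) := by
  have hfin : {t : ℝ | (qp a b).eval t = 0}.Finite := Polynomial.finite_setOf_isRoot hq
  rw [SL_decomp hd]
  by_cases hK : Kc a b = 0
  · rw [if_pos hK, if_pos hK]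
    rw [Set.ncard_union_eq ?_ (hfin.image _) (Set.finite_singleton _)]
    · rw [Set.ncard_image_of_injective _ mkT_injective, Set.ncard_singleton]
    · rw [Set.disjoint_singleton_right]
      rintro ⟨t, _, ht⟩
      exact mkT_ne_inf t ht
  · rw [if_neg hK, if_neg hK, Set.union_empty,
      Set.ncard_image_of_injective _ mkT_injective, add_zero]




lemma prod_linear_natDegree_le (a b : Fin d → ℝ) (s : Finset (Fin d)) :
    (∏ i ∈ s, (Polynomial.C (a i) * Polynomial.X + Polynomial.C (b i))).natDegree ≤ s.card := by
  refine le_trans (Polynomial.natDegree_prod_le _ _) ?_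
  exact le_trans (Finset.sum_le_sum fun i _ => Polynomial.natDegree_linear_le) (by simp)

lemma prod_linear_coeff_top (a b : Fin d → ℝ) (s : Finset (Fin d)) :
    (∏ i ∈ s, (Polynomial.C (a i) * Polynomial.X + Polynomial.C (b i))).coeff s.card
      = ∏ i ∈ s, a i := by
  classical
  induction s using Finset.induction_on with
  | empty => simp
  | insert c s' ha ih =>
    rw [Finset.prod_insert ha, Finset.prod_insert ha, Finset.card_insert_of_notMem ha]
    rw [add_mul, Polynomial.coeff_add, mul_assoc,
      Polynomial.coeff_C_mul, Polynomial.coeff_C_mul, Polynomial.coeff_X_mul, ih,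
      Polynomial.coeff_eq_zero_of_natDegree_lt
        (lt_of_le_of_lt (prod_linear_natDegree_le a b s') (Nat.lt_succ_self _))]
    ring

lemma qp_natDegree_le (a b : Fin d → ℝ) (hd : 1 ≤ d) : (qp a b).natDegree ≤ d := by
  refine le_trans (Polynomial.natDegree_sum_le _ _) ?_
  rw [Finset.fold_max_le]
  refine ⟨Nat.zero_le d, fun j _ => ?_⟩
  refine le_trans (Polynomial.natDegree_mul_le) ?_
  have h1 : (Polynomial.C (b j) * Polynomial.X - Polynomial.C (a j)).natDegree ≤ 1 := by
    rw [sub_eq_add_neg, ← Polynomial.C_neg]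
    exact Polynomial.natDegree_linear_le
  have h2 := prod_linear_natDegree_le a b (Finset.univ.erase j)
  rw [Finset.card_erase_of_mem (Finset.mem_univ j), Finset.card_univ, Fintype.card_fin] at h2
  omega

lemma qp_coeff_d (a b : Fin d → ℝ) (hd : 1 ≤ d) : (qp a b).coeff d = Kc a b := by
  obtain ⟨e, rfl⟩ : ∃ e, d = e + 1 := ⟨d - 1, by omega⟩
  rw [qp, Polynomial.finset_sum_coeff, Kc]
  refine Finset.sum_congr rfl fun j _ => ?_
  have hcard : (Finset.univ.erase j).card = e := by
    rw [Finset.card_erase_of_mem (Finset.mem_univ j), Finset.card_univ, Fintype.card_fin]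
    omega
  have hdeg := prod_linear_natDegree_le a b (Finset.univ.erase j)
  rw [hcard] at hdeg
  have htop := prod_linear_coeff_top a b (Finset.univ.erase j)
  rw [hcard] at htop
  rw [sub_mul, Polynomial.coeff_sub, mul_assoc, Polynomial.coeff_C_mul,
    Polynomial.coeff_C_mul, Polynomial.coeff_X_mul, htop,
    Polynomial.coeff_eq_zero_of_natDegree_lt (lt_of_le_of_lt hdeg (by omega))]
  ring

lemma qp_eval_root (a b : Fin d → ℝ) (ha : ∀ i, a i ≠ 0) (j : Fin d) :
    (qp a b).eval (-(b j) / (a j))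
      = (-((a j)^2 + (b j)^2) / (a j)) *
        ∏ i ∈ Finset.univ.erase j, (a i * ((-(b j) / (a j)) - (-(b i) / (a i)))) := by
  rw [qp, Polynomial.eval_finset_sum]
  rw [Finset.sum_eq_single j ?_ (by simp)]
  · rw [Polynomial.eval_mul, Polynomial.eval_prod]
    have hfront : Polynomial.eval (-(b j) / a j)
        (Polynomial.C (b j) * Polynomial.X - Polynomial.C (a j))
        = -((a j)^2 + (b j)^2) / (a j) := by
      have haj := ha j
      simp only [Polynomial.eval_sub, Polynomial.eval_mul, Polynomial.eval_C, Polynomial.eval_X]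
      field_simp
      ring
    rw [hfront]
    congr 1
    refine Finset.prod_congr rfl fun i hi => ?_
    simp only [Polynomial.eval_add, Polynomial.eval_mul, Polynomial.eval_C, Polynomial.eval_X]
    have hai := ha i
    have haj := ha j
    field_simp
    ring
  · intro k _ hkj
    rw [Polynomial.eval_mul, Polynomial.eval_prod]
    refine mul_eq_zero_of_right _ ?_
    refine Finset.prod_eq_zero (Finset.mem_erase.mpr ⟨hkj.symm, Finset.mem_univ j⟩) ?_
    simp only [Polynomial.eval_add, Polynomial.eval_mul, Polynomial.eval_C, Polynomial.eval_X]
    have haj := ha j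
    field_simp
    ring


lemma sorted_count (hd : 1 ≤ d) (a b : Fin d → ℝ) (ha : ∀ i, 0 < a i)
    (hm : StrictMono (fun i => -(b i) / (a i))) :
    (SL a b).ncard = d := by
  obtain ⟨e, rfl⟩ : ∃ e, d = e + 1 := ⟨d - 1, by omega⟩
  set t : Fin (e+1) → ℝ := fun i => -(b i) / (a i) with ht
  -- sign of qp at the roots t j
  have hsign : ∀ j : Fin (e+1), 0 < (-1:ℝ)^(e + 1 + (j:ℕ)) * (qp a b).eval (t j) := by
    intro j
    rw [show t j = -(b j) / (a j) from rfl, qp_eval_root a b (fun i => (ha i).ne') j]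
    have hfac : ∀ i ∈ Finset.univ.erase j, a i * (-(b j) / (a j) - -(b i) / (a i)) ≠ 0 := by
      intro i hi
      have hij : i ≠ j := (Finset.mem_erase.mp hi).1
      refine mul_ne_zero (ha i).ne' (sub_ne_zero.mpr ?_)
      exact fun hcon => hij (hm.injective hcon.symm)
    have hP := sign_prod (Finset.univ.erase j)
      (fun i => a i * (-(b j) / (a j) - -(b i) / (a i))) hfac
    have hfilt : (Finset.univ.erase j).filter
        (fun i => a i * (-(b j) / (a j) - -(b i) / (a i)) < 0) = Finset.Ioi j := by
      ext i
      simp only [Finset.mem_filter, Finset.mem_erase, Finset.mem_univ, true_and,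
        Finset.mem_Ioi, and_true]
      constructor
      · rintro ⟨hij, hneg⟩
        have h2 : -(b j) / (a j) - -(b i) / (a i) < 0 := by
          by_contra hcon
          push_neg at hcon
          nlinarith [ha i, mul_nonneg (ha i).le hcon]
        have : t j < t i := by simpa [ht, sub_neg] using h2
        exact hm.lt_iff_lt.mp this
      · intro hji
        have h2 : t j < t i := hm hji
        have h3 : -(b j) / (a j) - -(b i) / (a i) < 0 := by
          simpa [ht, sub_neg] using h2
        exact ⟨ne_of_gt hji, mul_neg_of_pos_of_neg (ha i) h3⟩
    rw [hfilt, Fin.card_Ioi] at hP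
    have hC : -((a j)^2 + (b j)^2) / (a j) < 0 := by
      apply div_neg_of_neg_of_pos _ (ha j)
      nlinarith [sq_nonneg (a j), sq_nonneg (b j), ha j]
    set P := ∏ i ∈ Finset.univ.erase j, (a i * (-(b j) / (a j) - -(b i) / (a i))) with hPdef
    have hpar : (-1:ℝ)^(e + 1 + (j:ℕ)) = -(-1:ℝ)^(e + 1 - 1 - (j:ℕ)) := by
      have h1 : (-1:ℝ)^(e + 1 + (j:ℕ)) = (-1:ℝ)^((e + 1 + (j:ℕ)) % 2) :=
        neg_one_pow_eq_pow_mod_two _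
      have h2 : (-1:ℝ)^(e + 1 - 1 - (j:ℕ) + 1) = (-1:ℝ)^((e + 1 - 1 - (j:ℕ) + 1) % 2) :=
        neg_one_pow_eq_pow_mod_two _
      have hje : (j:ℕ) ≤ e := Nat.lt_succ_iff.mp j.isLt
      have hmod : (e + 1 + (j:ℕ)) % 2 = (e + 1 - 1 - (j:ℕ) + 1) % 2 := by
        have := j.isLt
        omega
      rw [h1, hmod, ← h2, pow_succ]
      ring
    rw [hpar]
    have : -(-1:ℝ)^(e + 1 - 1 - (j:ℕ)) * (-((a j)^2 + (b j)^2) / (a j) * P)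
        = (-((a j)^2 + (b j)^2) / (a j) * -1) * ((-1:ℝ)^(e + 1 - 1 - (j:ℕ)) * P) := by
      ring
    rw [this]
    exact mul_pos (by nlinarith) hP
  have hq0 : qp a b ≠ 0 := by
    intro hcon
    have := hsign 0
    rw [hcon] at this
    simp at this
  -- interior roots
  have hroots : ∀ j : Fin e, ∃ z ∈ Set.Ioo (t j.castSucc) (t j.succ), (qp a b).eval z = 0 := by
    intro j
    apply exists_root_of_mul_neg _ (hm (Fin.castSucc_lt_succ (i := j)))
    have h1 := hsign j.castSucc
    have h2 := hsign j.succ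
    rw [Fin.coe_castSucc] at h1
    rw [Fin.val_succ] at h2
    have hmul := mul_pos h1 h2
    have hid : (-1:ℝ)^(e + 1 + (j:ℕ)) * (qp a b).eval (t j.castSucc)
        * ((-1:ℝ)^(e + 1 + ((j:ℕ) + 1)) * (qp a b).eval (t j.succ))
        = -((qp a b).eval (t j.castSucc) * (qp a b).eval (t j.succ))
          * ((-1:ℝ)^(e + 1 + (j:ℕ)) * (-1:ℝ)^(e + 1 + (j:ℕ))) := by
      rw [show e + 1 + ((j:ℕ) + 1) = (e + 1 + (j:ℕ)) + 1 by omega, pow_succ]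
      ring
    have hsq : (-1:ℝ)^(e + 1 + (j:ℕ)) * (-1:ℝ)^(e + 1 + (j:ℕ)) = 1 := by
      rw [← pow_add]
      exact Even.neg_one_pow ⟨e + 1 + (j:ℕ), by ring⟩
    rw [hid, hsq, mul_one] at hmul
    linarith
  choose r hrIoo hrzero using hroots
  have hrinj : Function.Injective r := by
    intro j j' hjj'
    by_contra hne
    rcases lt_or_gt_of_ne (fun h : j = j' => hne h) with hlt | hgt
    · have h1 : r j < t j.succ := (hrIoo j).2
      have h2 : t j'.castSucc < r j' := (hrIoo j').1
      have h3 : t j.succ ≤ t j'.castSucc := hm.monotone (Fin.succ_le_castSucc_iff.mpr hlt)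
      rw [hjj'] at h1
      linarith
    · have h1 : r j' < t j'.succ := (hrIoo j').2
      have h2 : t j.castSucc < r j := (hrIoo j).1
      have h3 : t j'.succ ≤ t j.castSucc := hm.monotone (Fin.succ_le_castSucc_iff.mpr hgt)
      rw [hjj'] at h2
      linarith
  set Z : Finset ℝ := (qp a b).roots.toFinset with hZ
  have hZset : {x : ℝ | (qp a b).eval x = 0} = ↑Z := by
    ext x
    simp only [hZ, Set.mem_setOf_eq, Multiset.mem_toFinset, Finset.mem_coe,
      Polynomial.mem_roots hq0, Polynomial.IsRoot.def]
  have hZcard_le : Z.card ≤ (qp a b).natDegree :=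
    le_trans (Multiset.toFinset_card_le _) (Polynomial.card_roots' _)
  have himage : Finset.image r Finset.univ ⊆ Z := by
    intro x hx
    obtain ⟨j, _, rfl⟩ := Finset.mem_image.mp hx
    rw [hZ, Multiset.mem_toFinset, Polynomial.mem_roots hq0]
    exact hrzero j
  have hcard_image : (Finset.image r Finset.univ).card = e := by
    rw [Finset.card_image_of_injective _ hrinj, Finset.card_univ, Fintype.card_fin]
  rw [SL_ncard hd a b hq0, hZset, Set.ncard_coe_finset]
  by_cases hK : Kc a b = 0
  · rw [if_pos hK]
    have hdeg : (qp a b).natDegree ≤ e := by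
      by_contra hcon
      push_neg at hcon
      have h1 : (qp a b).natDegree = e + 1 :=
        le_antisymm (qp_natDegree_le a b hd) hcon
      have h2 : (qp a b).leadingCoeff = 0 := by
        rw [Polynomial.leadingCoeff, h1, qp_coeff_d a b hd, hK]
      exact hq0 (Polynomial.leadingCoeff_eq_zero.mp h2)
    have hlower : e ≤ Z.card := hcard_image ▸ Finset.card_le_card himage
    omega
  · rw [if_neg hK]
    have hKdeg : (qp a b).natDegree = e + 1 :=
      le_antisymm (qp_natDegree_le a b hd)
        (Polynomial.le_natDegree_of_ne_zero (by rw [qp_coeff_d a b hd]; exact hK))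
    have hlc : (qp a b).leadingCoeff = Kc a b := by
      rw [Polynomial.leadingCoeff, hKdeg, qp_coeff_d a b hd]
    have hdegpos : 0 < (qp a b).degree :=
      Polynomial.natDegree_pos_iff_degree_pos.mp (by omega)
    have hqlast : (qp a b).eval (t (Fin.last e)) < 0 := by
      have hlast := hsign (Fin.last e)
      have hodd : (-1:ℝ)^(e + 1 + ((Fin.last e : Fin (e+1)) : ℕ)) = -1 := by
        rw [Fin.val_last]
        exact Odd.neg_one_pow ⟨e, by ring⟩
      rw [hodd] at hlast
      linarith
    have hextra : ∃ z, (qp a b).eval z = 0 ∧ ∀ j : Fin e, z ≠ r j := by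
      by_cases hKpos : 0 < Kc a b
      · obtain ⟨M, hM1, hM2⟩ :=
          exists_eval_pos_gt (qp a b) hdegpos (hlc ▸ hKpos) (t (Fin.last e))
        obtain ⟨z, hzIoo, hz0⟩ := exists_root_of_mul_neg _ hM1
          (mul_neg_of_neg_of_pos hqlast hM2)
        refine ⟨z, hz0, fun j hcon => ?_⟩
        have h1 : r j < t j.succ := (hrIoo j).2
        have h2 : t j.succ ≤ t (Fin.last e) := hm.monotone (Fin.le_last _)
        have h3 : t (Fin.last e) < z := hzIoo.1
        rw [hcon] at h3
        linarith
      · have hKneg : Kc a b < 0 := lt_of_le_of_ne (not_lt.mp hKpos) hK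
        set p2 : Polynomial ℝ :=
          Polynomial.C ((-1:ℝ)^e) * ((qp a b).comp (-Polynomial.X)) with hp2
        have hqrnd : ((qp a b).comp (-Polynomial.X)).natDegree = e + 1 := by
          rw [Polynomial.natDegree_comp, hKdeg]
          simp
        have hqrlc : ((qp a b).comp (-Polynomial.X)).leadingCoeff
            = Kc a b * (-1:ℝ)^(e+1) := by
          rw [Polynomial.leadingCoeff_comp (by simp), hlc, hKdeg]
          congr 1
          simp
        have hp2nd : p2.natDegree = e + 1 := by
          rw [hp2, Polynomial.natDegree_C_mul (by positivity : ((-1:ℝ)^e) ≠ 0), hqrnd]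
        have hp2lc : p2.leadingCoeff = -(Kc a b) := by
          rw [hp2, Polynomial.leadingCoeff_mul, Polynomial.leadingCoeff_C, hqrlc]
          have : (-1:ℝ)^e * (-1:ℝ)^(e+1) = -1 := by
            rw [← pow_add]
            exact Odd.neg_one_pow ⟨e, by ring⟩
          calc (-1:ℝ)^e * (Kc a b * (-1:ℝ)^(e+1))
              = ((-1:ℝ)^e * (-1:ℝ)^(e+1)) * Kc a b := by ring
            _ = -(Kc a b) := by rw [this]; ring
        have hp2degpos : 0 < p2.degree :=
          Polynomial.natDegree_pos_iff_degree_pos.mp (by omega)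
        obtain ⟨M, hM1, hM2⟩ := exists_eval_pos_gt p2 hp2degpos
          (by rw [hp2lc]; linarith) (-(t 0))
        have hMeval : p2.eval M = (-1:ℝ)^e * (qp a b).eval (-M) := by
          rw [hp2, Polynomial.eval_mul, Polynomial.eval_C, Polynomial.eval_comp]
          simp
        have hq0sign : 0 < (-1:ℝ)^(e + 1) * (qp a b).eval (t 0) := by
          simpa using hsign 0
        have hsq : (-1:ℝ)^e * (-1:ℝ)^(e+1) = -1 := by
          rw [← pow_add]
          exact Odd.neg_one_pow ⟨e, by ring⟩
        have hprodneg : (qp a b).eval (-M) * (qp a b).eval (t 0) < 0 := by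
          rw [hMeval] at hM2
          have hmul := mul_pos hM2 hq0sign
          have heq : (-1:ℝ)^e * (qp a b).eval (-M) * ((-1:ℝ)^(e+1) * (qp a b).eval (t 0))
              = ((-1:ℝ)^e * (-1:ℝ)^(e+1)) * ((qp a b).eval (-M) * (qp a b).eval (t 0)) := by
            ring
          rw [heq, hsq] at hmul
          linarith
        have hMlt : -M < t 0 := by linarith
        obtain ⟨z, hzIoo, hz0⟩ := exists_root_of_mul_neg _ hMlt hprodneg
        refine ⟨z, hz0, fun j hcon => ?_⟩
        have h1 : t j.castSucc < r j := (hrIoo j).1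
        have h2 : t 0 ≤ t j.castSucc := hm.monotone (Fin.zero_le _)
        have h3 : z < t 0 := hzIoo.2
        rw [hcon] at h3
        linarith
    obtain ⟨z, hz0, hzout⟩ := hextra
    have hznotmem : z ∉ Finset.image r Finset.univ := by
      intro hmem
      obtain ⟨j, _, hj⟩ := Finset.mem_image.mp hmem
      exact hzout j hj.symm
    have hins : insert z (Finset.image r Finset.univ) ⊆ Z := by
      intro x hx
      rcases Finset.mem_insert.mp hx with rfl | hx
      · rw [hZ, Multiset.mem_toFinset, Polynomial.mem_roots hq0]
        exact hz0
      · exact himage hx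
    have hlower : e + 1 ≤ Z.card := by
      have : (insert z (Finset.image r Finset.univ)).card = e + 1 := by
        rw [Finset.card_insert_of_notMem hznotmem, hcard_image]
      exact this ▸ Finset.card_le_card hins
    omega

lemma SL_iff (a b a' b' : Fin d → ℝ)
    (h : ∀ v, EL a' b' v = 0 ↔ EL a b v = 0) : SL a' b' = SL a b := by
  ext p
  constructor
  · rintro ⟨v, hv, rfl, hE⟩
    exact ⟨v, hv, rfl, (h v).mp hE⟩
  · rintro ⟨v, hv, rfl, hE⟩
    exact ⟨v, hv, rfl, (h v).mpr hE⟩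

lemma EL_smul_coeffs (ε a b : Fin d → ℝ) (v : Fin 2 → ℝ) :
    EL (fun i => ε i * a i) (fun i => ε i * b i) v = (∏ i, ε i) * EL a b v := by
  rw [EL, EL, Finset.mul_sum]
  refine Finset.sum_congr rfl fun j _ => ?_
  have hprod : ∏ i ∈ Finset.univ.erase j, (ε i * a i * v 0 + ε i * b i * v 1)
      = (∏ i ∈ Finset.univ.erase j, ε i) *
        ∏ i ∈ Finset.univ.erase j, (a i * v 0 + b i * v 1) := by
    rw [← Finset.prod_mul_distrib]
    exact Finset.prod_congr rfl fun i _ => by ring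
  rw [hprod, ← Finset.mul_prod_erase Finset.univ ε (Finset.mem_univ j)]
  ring

lemma EL_perm (σ : Equiv.Perm (Fin d)) (a b : Fin d → ℝ) (v : Fin 2 → ℝ) :
    EL (a ∘ σ) (b ∘ σ) v = EL a b v := by
  rw [EL, EL]
  have hinner : ∀ j : Fin d, ∏ i ∈ Finset.univ.erase j, (a (σ i) * v 0 + b (σ i) * v 1)
      = ∏ i ∈ Finset.univ.erase (σ j), (a i * v 0 + b i * v 1) := by
    intro j
    refine Finset.prod_nbij σ ?_ ?_ ?_ (fun _ _ => rfl)
    · intro i hi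
      simp only [Finset.mem_erase, Finset.mem_univ, and_true] at hi ⊢
      exact fun h => hi (σ.injective h)
    · exact fun i _ i' _ h => σ.injective h
    · intro i hi
      simp only [Finset.coe_erase, Finset.coe_univ, Set.mem_diff, Set.mem_singleton_iff] at hi
      refine ⟨σ.symm i, ?_, by simp⟩
      simp only [Finset.coe_erase, Finset.coe_univ, Set.mem_diff, Set.mem_singleton_iff]
      refine ⟨trivial, fun h => hi.2 ?_⟩
      rw [← h]
      simp
  rw [← Equiv.sum_comp σ (fun j => (v 0 * b j - v 1 * a j) *
    ∏ i ∈ Finset.univ.erase j, (a i * v 0 + b i * v 1))]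
  refine Finset.sum_congr rfl fun j _ => ?_
  simp only [Function.comp_apply]
  rw [hinner j]

lemma main_count (hd : 1 ≤ d) (a b : Fin d → ℝ) (ha : ∀ i, a i ≠ 0)
    (hdet : ∀ i j, i ≠ j → a i * b j - b i * a j ≠ 0) :
    (SL a b).ncard = d := by
  classical
  set ε : Fin d → ℝ := fun i => if 0 < a i then 1 else -1 with hε
  have hεne : ∀ i, ε i ≠ 0 := by
    intro i
    rw [hε]
    by_cases h : 0 < a i <;> simp [h]
  set a1 : Fin d → ℝ := fun i => ε i * a i with ha1def
  set b1 : Fin d → ℝ := fun i => ε i * b i with hb1def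
  have ha1 : ∀ i, 0 < a1 i := by
    intro i
    rw [ha1def, hε]
    by_cases h : 0 < a i
    · simpa [h] using h
    · simp only [h, if_false]
      have := lt_of_le_of_ne (not_lt.mp h) (ha i)
      linarith
  have hdet1 : ∀ i j, i ≠ j → a1 i * b1 j - b1 i * a1 j ≠ 0 := by
    intro i j hij
    rw [ha1def, hb1def]
    have : ε i * a i * (ε j * b j) - ε i * b i * (ε j * a j)
        = (ε i * ε j) * (a i * b j - b i * a j) := by ring
    rw [this]
    exact mul_ne_zero (mul_ne_zero (hεne i) (hεne j)) (hdet i j hij)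
  set t1 : Fin d → ℝ := fun i => -(b1 i) / (a1 i) with ht1
  have ht1inj : Function.Injective t1 := by
    intro i j hij
    by_contra hne
    apply hdet1 i j hne
    rw [ht1] at hij
    have h1 := (ha1 i).ne'
    have h2 := (ha1 j).ne'
    field_simp at hij
    linarith [hij]
  set σ : Equiv.Perm (Fin d) := Tuple.sort t1 with hσ
  have hm : StrictMono (fun i => -(b1 (σ i)) / (a1 (σ i))) := by
    have hmono : Monotone (t1 ∘ σ) := Tuple.monotone_sort t1
    have hinj : Function.Injective (t1 ∘ σ) := ht1inj.comp σ.injective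
    exact hmono.strictMono_of_injective hinj
  have h1 : SL a b = SL a1 b1 := by
    refine (SL_iff a b a1 b1 fun v => ?_).symm
    rw [ha1def, hb1def, EL_smul_coeffs]
    constructor
    · intro h
      rcases mul_eq_zero.mp h with h | h
      · exact absurd h (Finset.prod_ne_zero_iff.mpr fun i _ => hεne i)
      · exact h
    · intro h
      rw [h, mul_zero]
  have h2 : SL a1 b1 = SL (a1 ∘ σ) (b1 ∘ σ) := by
    refine (SL_iff _ _ _ _ fun v => ?_)
    rw [EL_perm]
  rw [h1, h2]
  exact sorted_count hd (a1 ∘ σ) (b1 ∘ σ) (fun i => ha1 (σ i)) hm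

noncomputable def Tlin (s : ℝ) : (Fin 2 → ℝ) →ₗ[ℝ] (Fin 2 → ℝ) where
  toFun v := ![v 0 - s * v 1, s * v 0 + v 1]
  map_add' u v := by
    funext i
    fin_cases i <;> simp <;> ring
  map_smul' c v := by
    funext i
    fin_cases i <;> simp <;> ring

lemma Tlin_injective (s : ℝ) : Function.Injective (Tlin s) := by
  intro u v huv
  have h0 := congrFun huv 0
  have h1 := congrFun huv 1
  simp only [Tlin, LinearMap.coe_mk, AddHom.coe_mk, Matrix.cons_val_zero,
    Matrix.cons_val_one, Matrix.head_cons] at h0 h1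
  have hs : (1:ℝ) + s^2 ≠ 0 := by positivity
  have hy : u 1 = v 1 := by
    have h2 : (u 1 - v 1) * (1 + s^2) = 0 := by linear_combination h1 - s * h0
    have h3 := (mul_eq_zero.mp h2).resolve_right hs
    linarith
  have hx : u 0 = v 0 := by linear_combination h0 + s * hy
  funext i
  fin_cases i
  · simpa using hx
  · simpa using hy

lemma Tlin_surjective (s : ℝ) : Function.Surjective (Tlin s) := by
  intro w
  have hs : (1:ℝ) + s^2 ≠ 0 := by positivity
  refine ⟨![(w 0 + s * w 1) / (1 + s^2), (-(s * w 0) + w 1) / (1 + s^2)], ?_⟩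
  funext i
  fin_cases i <;>
    simp only [Fin.zero_eta, Fin.mk_one, Tlin, LinearMap.coe_mk, AddHom.coe_mk, Matrix.cons_val_zero,
      Matrix.cons_val_one, Matrix.head_cons] <;>
    field_simp <;> ring

lemma EL_Tlin (A B : Fin d → ℝ) (s : ℝ) (v : Fin 2 → ℝ) :
    EL A B (Tlin s v)
      = EL (fun i => A i + B i * s) (fun i => -(A i) * s + B i) v := by
  rw [EL, EL]
  refine Finset.sum_congr rfl fun j _ => ?_
  have h0 : (Tlin s v) 0 = v 0 - s * v 1 := rfl
  have h1 : (Tlin s v) 1 = s * v 0 + v 1 := rfl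
  rw [h0, h1]
  have hprod : ∏ i ∈ Finset.univ.erase j, (A i * (v 0 - s * v 1) + B i * (s * v 0 + v 1))
      = ∏ i ∈ Finset.univ.erase j, ((A i + B i * s) * v 0 + (-(A i) * s + B i) * v 1) :=
    Finset.prod_congr rfl fun i _ => by ring
  rw [hprod]
  ring

lemma SL_ncard_eq (A B : Fin d → ℝ) (s : ℝ) :
    (SL A B).ncard
      = (SL (fun i => A i + B i * s) (fun i => -(A i) * s + B i)).ncard := by
  set a : Fin d → ℝ := fun i => A i + B i * s with hadef
  set b : Fin d → ℝ := fun i => -(A i) * s + B i with hbdef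
  have himg : SL A B = Projectivization.map (Tlin s) (Tlin_injective s) '' SL a b := by
    ext p
    constructor
    · rintro ⟨w, hw, rfl, hE⟩
      obtain ⟨v, rfl⟩ := Tlin_surjective s w
      have hv : v ≠ 0 := fun h => hw (by rw [h, map_zero])
      refine ⟨Projectivization.mk ℝ v hv, ⟨v, hv, rfl, ?_⟩, ?_⟩
      · rw [← EL_Tlin]
        exact hE
      · rw [Projectivization.map_mk]
    · rintro ⟨q, ⟨v, hv, rfl, hE⟩, rfl⟩
      rw [Projectivization.map_mk]
      refine ⟨Tlin s v, _, rfl, ?_⟩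
      rw [EL_Tlin]
      exact hE
  rw [himg]
  exact Set.ncard_image_of_injective _
    (Projectivization.map_injective (Tlin s) (Tlin_injective s))

end Eig


/-- A binary form of degree `d` that splits as a product of `d` pairwise
non-proportional real linear forms has exactly `d` distinct real eigenvectors. -/
theorem eigenvectors_of_split_binary_form
    {d : ℕ} (hd : 1 ≤ d) (L : Fin d → ℝ × ℝ)
    (hL : ∀ i, L i ≠ 0)
    (hprop : ∀ i j, i ≠ j → (L i).1 * (L j).2 - (L i).2 * (L j).1 ≠ 0)
    (f : MvPolynomial (Fin 2) ℝ)
    (hf : f = ∏ i : Fin d, (C (L i).1 * X 0 + C (L i).2 * X 1)) :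
    (eigSet f).ncard = d := by
  classical
  have heig : eigSet f = Eig.SL (fun i => (L i).1) (fun i => (L i).2) :=
    Eig.eigSet_eq_SL _ _ f hf
  obtain ⟨s, hs⟩ : ∃ s : ℝ, ∀ i, (L i).1 + (L i).2 * s ≠ 0 := by
    obtain ⟨s, hs⟩ :=
      Infinite.exists_notMem_finset (Finset.univ.image (fun i => -((L i).1) / ((L i).2)))
    refine ⟨s, fun i hcon => ?_⟩
    by_cases hB : (L i).2 = 0
    · apply hL i
      rw [hB, zero_mul, add_zero] at hcon
      exact Prod.ext_iff.mpr ⟨hcon, hB⟩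
    · apply hs
      refine Finset.mem_image.mpr ⟨i, Finset.mem_univ i, ?_⟩
      field_simp
      linarith
  rw [heig, Eig.SL_ncard_eq _ _ s]
  refine Eig.main_count hd _ _ (fun i => hs i) ?_
  intro i j hij
  have h := hprop i j hij
  have hexp : ((L i).1 + (L i).2 * s) * (-((L j).1) * s + (L j).2)
      - (-((L i).1) * s + (L i).2) * ((L j).1 + (L j).2 * s)
      = (1 + s^2) * ((L i).1 * (L j).2 - (L i).2 * (L j).1) := by ring
  rw [hexp]
  exact mul_ne_zero (by positivity) h
end

section
/- Let n ≥ 1 and let f ∈ ℝ[x₁,…,xₙ] be a homogeneous polynomial of degree d ≥ 1. Then every connected component U of the set {v ∈ S^{n-1} : f(v) ≠ 0} contains a real eigenvector of f: there exist v ∈ U and λ ∈ ℝ with ∇f(v) = λv. -/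
open MvPolynomial

noncomputable def gradCLM {n : ℕ} (f : MvPolynomial (Fin n) ℝ) (v : Fin n → ℝ) :
    (Fin n → ℝ) →L[ℝ] ℝ :=
  ∑ i, eval v (pderiv i f) • (ContinuousLinearMap.proj i : (Fin n → ℝ) →L[ℝ] ℝ)

lemma gradCLM_apply {n : ℕ} (f : MvPolynomial (Fin n) ℝ) (v w : Fin n → ℝ) :
    gradCLM f v w = ∑ i, eval v (pderiv i f) * w i := by
  simp [gradCLM]

lemma hasStrictFDerivAt_eval {n : ℕ} (f : MvPolynomial (Fin n) ℝ) (v : Fin n → ℝ) :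
    HasStrictFDerivAt (fun w => eval w f) (gradCLM f v) v := by
  induction f using MvPolynomial.induction_on with
  | C a =>
      simp only [eval_C]
      have : gradCLM (C a : MvPolynomial (Fin n) ℝ) v = 0 := by
        simp [gradCLM]
      rw [this]
      exact hasStrictFDerivAt_const a v
  | add p q hp hq =>
      have : gradCLM (p + q) v = gradCLM p v + gradCLM q v := by
        simp [gradCLM, Finset.sum_add_distrib, add_smul]
      rw [this]
      simp only [map_add]
      exact hp.add hq
  | mul_X p i hp =>
      have h2 : HasStrictFDerivAt (fun w : Fin n → ℝ => w i)
          (ContinuousLinearMap.proj i : (Fin n → ℝ) →L[ℝ] ℝ) v :=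
        (ContinuousLinearMap.proj i : (Fin n → ℝ) →L[ℝ] ℝ).hasStrictFDerivAt
      have := hp.mul h2
      simp only [eval_mul, eval_X]
      refine this.congr_fderiv (Eq.symm ?_)
      ext w
      simp only [gradCLM, ContinuousLinearMap.add_apply, ContinuousLinearMap.smul_apply,
        ContinuousLinearMap.sum_apply, ContinuousLinearMap.proj_apply]
      rw [Finset.sum_congr rfl (fun j _ => by
        rw [pderiv_mul, pderiv_X]
        simp [Pi.single_apply, apply_ite (eval v)] : ∀ j ∈ Finset.univ, eval v (pderiv j (p * X i)) • w j =
          (eval v (pderiv j p) * v i + (if i = j then eval v p else 0)) • w j)]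
      simp only [add_smul, smul_eq_mul, Finset.sum_add_distrib, ite_mul, zero_mul,
        Finset.sum_ite_eq, Finset.mem_univ, if_true, Finset.mul_sum]
      simp only [add_mul, ite_mul, zero_mul]
      rw [Finset.sum_add_distrib, add_comm]
      congr 1
      · simp [Finset.sum_ite_eq]
      · exact Finset.sum_congr rfl fun j _ => by ring

lemma continuous_evalPoly {n : ℕ} (f : MvPolynomial (Fin n) ℝ) :
    Continuous fun v : Fin n → ℝ => eval v f :=
  continuous_iff_continuousAt.2 fun v => (hasStrictFDerivAt_eval f v).continuousAt

/-- Every connected component of `{v ∈ S^{n-1} : f(v) ≠ 0}` contains a real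
eigenvector of the homogeneous polynomial `f`. -/
theorem component_contains_eigenvector
    {n : ℕ} (hn : 1 ≤ n) {d : ℕ} (hd : 1 ≤ d) (f : MvPolynomial (Fin n) ℝ)
    (hf : f.IsHomogeneous d) (U : Set (Fin n → ℝ)) (x : Fin n → ℝ)
    (hx : x ∈ {v : Fin n → ℝ | (∑ i, v i ^ 2 = 1) ∧ eval v f ≠ 0})
    (hU : U = connectedComponentIn {v : Fin n → ℝ | (∑ i, v i ^ 2 = 1) ∧ eval v f ≠ 0} x) :
    ∃ v ∈ U, ∃ lam : ℝ, grad f v = lam • v := by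
  clear hd hf
  obtain ⟨m, rfl⟩ : ∃ m, n = m + 1 := ⟨n - 1, by omega⟩
  set W : Set (Fin (m + 1) → ℝ) := {v | (∑ i, v i ^ 2 = 1) ∧ eval v f ≠ 0} with hWdef
  set S : Set (Fin (m + 1) → ℝ) := {v | ∑ i, v i ^ 2 = 1} with hSdef
  have hWS : W ⊆ S := fun v hv => hv.1
  obtain ⟨hxS, hxf⟩ := hx
  -- Euclidean picture
  let e : (Fin (m + 1) → ℝ) ≃ₜ EuclideanSpace ℝ (Fin (m + 1)) :=
    (EuclideanSpace.equiv (Fin (m + 1)) ℝ).symm.toHomeomorph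
  have heS : e '' S = Metric.sphere (0 : EuclideanSpace ℝ (Fin (m + 1))) 1 := by
    ext w
    simp only [Set.mem_image, mem_sphere_zero_iff_norm]
    constructor
    · rintro ⟨v, hv, rfl⟩
      rw [EuclideanSpace.norm_eq]
      have : ∑ i, ‖(e v) i‖ ^ 2 = 1 := by
        show ∑ i, ‖v i‖ ^ 2 = 1
        simpa [Real.norm_eq_abs, sq_abs] using (show ∑ i, v i ^ 2 = 1 from hv)
      rw [this, Real.sqrt_one]
    · intro hw
      refine ⟨e.symm w, ?_, e.apply_symm_apply w⟩
      have h1 : Real.sqrt (∑ i, ‖w i‖ ^ 2) = 1 := by rw [← EuclideanSpace.norm_eq, hw]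
      have h2 : ∑ i, ‖w i‖ ^ 2 = 1 := by
        have hnn : 0 ≤ ∑ i, ‖w i‖ ^ 2 :=
          Finset.sum_nonneg fun i _ => sq_nonneg _
        nlinarith [Real.sq_sqrt hnn]
      show ∑ i, w i ^ 2 = 1
      simpa [Real.norm_eq_abs, sq_abs] using h2
  have hScompact : IsCompact S := by
    have h1 : IsCompact (Metric.sphere (0 : EuclideanSpace ℝ (Fin (m + 1))) 1) :=
      isCompact_sphere _ _
    have h2 : e.symm '' (Metric.sphere (0 : EuclideanSpace ℝ (Fin (m + 1))) 1) = S := by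
      rw [← heS]; exact e.toEquiv.symm_image_image S
    rw [← h2]
    exact h1.image e.symm.continuous
  have hSclosed : IsClosed S := hScompact.isClosed
  haveI : LocallyConnectedSpace (Metric.sphere (0 : EuclideanSpace ℝ (Fin (m + 1))) 1) :=
    ChartedSpace.locallyConnectedSpace (EuclideanSpace ℝ (Fin m)) _
  haveI : LocallyConnectedSpace S :=
    Homeomorph.locallyConnectedSpace ((e.image S).trans (Homeomorph.setCongr heS))
  -- the open subset of the sphere where f ≠ 0
  let W' : Set S := {v : S | eval v.1 f ≠ 0}
  have hW'open : IsOpen W' :=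
    ((continuous_evalPoly f).comp continuous_subtype_val).isOpen_preimage {0}ᶜ
      isOpen_compl_singleton
  let x' : S := ⟨x, hxS⟩
  have hx'W' : x' ∈ W' := hxf
  set U' : Set S := connectedComponentIn W' x' with hU'def
  have hU'open : IsOpen U' := hW'open.connectedComponentIn
  have hvalW' : Subtype.val '' W' = W := by
    ext v
    constructor
    · rintro ⟨⟨v, hvS⟩, hvW', rfl⟩; exact ⟨hvS, hvW'⟩
    · rintro ⟨h1, h2⟩; exact ⟨⟨v, h1⟩, h2, rfl⟩
  have hUW : U ⊆ W := hU ▸ connectedComponentIn_subset _ _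
  have hxU : x ∈ U := hU ▸ mem_connectedComponentIn ⟨hxS, hxf⟩
  have hUconn : IsPreconnected U := hU ▸ isPreconnected_connectedComponentIn
  have key : U = Subtype.val '' U' := by
    apply Set.Subset.antisymm
    · have hUS : U ⊆ S := hUW.trans hWS
      have himg : Subtype.val '' (Subtype.val ⁻¹' U : Set S) = U := by
        rw [Subtype.image_preimage_coe]
        exact Set.inter_eq_self_of_subset_right hUS
      have hpre : IsPreconnected (Subtype.val ⁻¹' U : Set S) := by
        rw [← Topology.IsInducing.subtypeVal.isPreconnected_image, himg]
        exact hUconn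
      have hsub : (Subtype.val ⁻¹' U : Set S) ⊆ W' := fun v hv => (hUW hv).2
      have hss := hpre.subset_connectedComponentIn (x := x') (show x' ∈ _ from hxU) hsub
      rw [← himg]
      exact Set.image_mono hss
    · have h1 : IsPreconnected (Subtype.val '' U') :=
        Topology.IsInducing.subtypeVal.isPreconnected_image.2 isPreconnected_connectedComponentIn
      have h2 : Subtype.val '' U' ⊆ W := by
        rw [← hvalW']
        exact Set.image_mono (connectedComponentIn_subset _ _)
      have h3 : x ∈ Subtype.val '' U' := ⟨x', mem_connectedComponentIn hx'W', rfl⟩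
      rw [hU]
      exact h1.subset_connectedComponentIn h3 h2
  -- constant sign
  set c : ℝ := if 0 < eval x f then 1 else -1 with hcdef
  have hc0 : c ≠ 0 := by
    rcases ite_eq_or_eq (0 < eval x f) (1:ℝ) (-1) with h | h <;> rw [hcdef, h] <;> norm_num
  have hx0 : 0 < c * eval x f := by
    rcases lt_trichotomy (eval x f) 0 with h | h | h
    · rw [hcdef, if_neg (by linarith)]; linarith
    · exact absurd h hxf
    · rw [hcdef, if_pos h]; linarith
  -- maximize c * f on closure U
  have hclUS : closure U ⊆ S := closure_minimal (hUW.trans hWS) hSclosed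
  have hclU : IsCompact (closure U) := hScompact.of_isClosed_subset isClosed_closure hclUS
  obtain ⟨p, hpcl, hpmax⟩ := hclU.exists_isMaxOn ⟨x, subset_closure hxU⟩
    ((continuous_const.mul (continuous_evalPoly f)).continuousOn)
  have hpf : 0 < c * eval p f := lt_of_lt_of_le hx0 (hpmax (subset_closure hxU))
  have hpS : p ∈ S := hclUS hpcl
  have hpf' : eval p f ≠ 0 := fun h => by rw [h, mul_zero] at hpf; exact lt_irrefl 0 hpf
  -- p ∈ U
  have hpU : p ∈ U := by
    let p' : S := ⟨p, hpS⟩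
    have hp'W' : p' ∈ W' := hpf'
    have hp'cl : p' ∈ closure U' := by
      rw [closure_subtype, ← key]
      exact hpcl
    have hopen : IsOpen (connectedComponentIn W' p') := hW'open.connectedComponentIn
    have hmem : p' ∈ connectedComponentIn W' p' := mem_connectedComponentIn hp'W'
    obtain ⟨q, hq1, hq2⟩ := mem_closure_iff.1 hp'cl _ hopen hmem
    have hcomp : connectedComponentIn W' p' = U' := by
      rw [connectedComponentIn_eq hq1, hU'def, connectedComponentIn_eq hq2]
    rw [key]
    exact ⟨p', hcomp ▸ hmem, rfl⟩
  -- local extremum of f on S at p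
  have hmaxOn : IsLocalMaxOn (fun v => c * eval v f) S p := by
    obtain ⟨V, hVopen, hVpre⟩ := isOpen_induced_iff.1 hU'open
    have hUV : U = V ∩ S := by
      rw [key, ← hVpre, Subtype.image_preimage_coe, Set.inter_comm]
    have hpV : p ∈ V := (hUV ▸ hpU).1
    have hmem : V ∩ S ∈ nhdsWithin p S :=
      Filter.inter_mem (mem_nhdsWithin_of_mem_nhds (hVopen.mem_nhds hpV)) self_mem_nhdsWithin
    exact Filter.eventually_of_mem hmem fun v hv =>
      hpmax (subset_closure (by rw [hUV]; exact hv))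
  have hextr : IsLocalExtrOn (fun v => eval v f) S p := by
    have hcor : c = 1 ∨ c = -1 := ite_eq_or_eq _ _ _
    rcases hcor with hc | hc
    · right
      rw [hc] at hmaxOn
      filter_upwards [hmaxOn] with v hv
      simpa using hv
    · left
      rw [hc] at hmaxOn
      filter_upwards [hmaxOn] with v hv
      simp only [neg_one_mul, neg_le_neg_iff] at hv
      exact hv
  -- Lagrange multipliers
  set G : MvPolynomial (Fin (m + 1)) ℝ := ∑ i, X i * X i with hGdef
  have hGeval : ∀ v : Fin (m + 1) → ℝ, eval v G = ∑ i, v i ^ 2 := by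
    intro v
    rw [hGdef]
    simp [sq]
  have hSset : S = {v | eval v G = eval p G} := by
    ext v
    have hp1 : ∑ i, p i ^ 2 = 1 := hpS
    simp only [Set.mem_setOf_eq, hGeval, hSdef, hp1]
  have hextr2 : IsLocalExtrOn (fun v => eval v f) {v | eval v G = eval p G} p := by
    rwa [← hSset]
  obtain ⟨a, b, hab, hsum⟩ := hextr2.exists_multipliers_of_hasStrictFDerivAt_1d
    (hasStrictFDerivAt_eval G p) (hasStrictFDerivAt_eval f p)
  have hpdG : ∀ j, eval p (pderiv j G) = 2 * p j := by
    intro j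
    rw [hGdef, map_sum]
    simp [pderiv_mul, pderiv_X, Pi.single_apply, apply_ite (eval p), mul_comm]
    rw [Finset.sum_add_distrib]
    simp [Finset.sum_ite_eq']
    ring
  have happ : ∀ i, a * (2 * p i) + b * eval p (pderiv i f) = 0 := by
    intro i
    have h := congrArg (fun L : (Fin (m + 1) → ℝ) →L[ℝ] ℝ => L (Pi.single i 1)) hsum
    simp only [ContinuousLinearMap.add_apply, ContinuousLinearMap.smul_apply,
      ContinuousLinearMap.zero_apply, smul_eq_mul, gradCLM_apply] at h
    simp only [Pi.single_apply, mul_ite, mul_one, mul_zero, Finset.sum_ite_eq',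
      Finset.mem_univ, if_true, hpdG] at h
    exact h
  have hb : b ≠ 0 := by
    intro hb0
    have ha : a ≠ 0 := by
      intro ha0
      exact hab (by rw [ha0, hb0]; rfl)
    have hp0 : ∀ i, p i = 0 := by
      intro i
      have h := happ i
      rw [hb0, zero_mul, add_zero] at h
      rcases mul_eq_zero.1 h with h' | h'
      · exact absurd h' ha
      · linarith [h']
    have hp1 : ∑ i, p i ^ 2 = 1 := hpS
    rw [Finset.sum_congr rfl (fun i _ => by rw [hp0 i]; norm_num :
      ∀ i ∈ Finset.univ, p i ^ 2 = (0:ℝ))] at hp1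
    simp at hp1
  refine ⟨p, hpU, -(2 * a) / b, ?_⟩
  funext i
  show eval p (pderiv i f) = (-(2 * a) / b) * p i
  have h := happ i
  field_simp
  linarith
end
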